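/- Let γ > 0 and let f and g be nonnegative measurable functions on ℝ^k with ∫f^{1+γ}, ∫g^{1+γ}, ∫f g^γ finite and ∫f^{1+γ} > 0, ∫g^{1+γ} > 0. Then the pseudo-spherical score satisfies S_sphere(f,g) ≥ S_sphere(f,f), and equality S_sphere(f,g) = S_sphere(f,f) holds if and only if f and g are linearly dependent, i.e., there exists a constant λ > 0 with f = λ·g almost everywhere. -/

import Mathlib

open MeasureTheory

private lemma young_strict {p q a b : ℝ} (hpq : Real.HolderConjugate p q)
    (ha : 0 ≤ a) (hb : 0 ≤ b) (hne : a ^ p ≠ b ^ q) :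
    a * b < a ^ p / p + b ^ q / q := by
  rcases ha.eq_or_lt with rfl | ha'
  · rw [Real.zero_rpow hpq.ne_zero] at hne ⊢
    have hbq : 0 < b ^ q := lt_of_le_of_ne (Real.rpow_nonneg hb q) (Ne.symm (fun h => hne h.symm))
    have : 0 < b ^ q / q := div_pos hbq hpq.symm.pos
    simpa using this
  rcases hb.eq_or_lt with rfl | hb'
  · rw [Real.zero_rpow hpq.symm.ne_zero] at hne ⊢
    have hap : 0 < a ^ p := lt_of_le_of_ne (Real.rpow_nonneg ha p) (Ne.symm hne)
    have : 0 < a ^ p / p := div_pos hap hpq.pos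
    simpa using this
  · have hx : 0 < a ^ p := Real.rpow_pos_of_pos ha' p
    have hy : 0 < b ^ q := Real.rpow_pos_of_pos hb' q
    have hR : 0 < p⁻¹ * a ^ p + q⁻¹ * b ^ q := by
      have := hpq.inv_pos; have := hpq.symm.inv_pos; positivity
    have hc := strictConcaveOn_log_Ioi.2 (Set.mem_Ioi.2 hx) (Set.mem_Ioi.2 hy) hne
      hpq.inv_pos hpq.symm.inv_pos hpq.inv_add_inv_eq_one
    simp only [smul_eq_mul] at hc
    rw [Real.log_rpow ha', Real.log_rpow hb'] at hc
    have hla : p⁻¹ * (p * Real.log a) = Real.log a := by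
      rw [inv_mul_eq_div, mul_comm p, mul_div_assoc, div_self hpq.ne_zero, mul_one]
    have hlb : q⁻¹ * (q * Real.log b) = Real.log b := by
      rw [inv_mul_eq_div, mul_comm q, mul_div_assoc, div_self hpq.symm.ne_zero, mul_one]
    rw [hla, hlb, ← Real.log_mul ha'.ne' hb'.ne'] at hc
    have h2 : a * b < p⁻¹ * a ^ p + q⁻¹ * b ^ q := by
      have := Real.exp_lt_exp.2 hc
      rwa [Real.exp_log (by positivity), Real.exp_log hR] at this
    calc a * b < p⁻¹ * a ^ p + q⁻¹ * b ^ q := h2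
      _ = a ^ p / p + b ^ q / q := by rw [inv_mul_eq_div, inv_mul_eq_div]

private lemma young_eq {p q a b : ℝ} (hpq : Real.HolderConjugate p q)
    (ha : 0 ≤ a) (hb : 0 ≤ b) (h : a * b = a ^ p / p + b ^ q / q) : a ^ p = b ^ q := by
  by_contra hne
  exact (young_strict hpq ha hb hne).ne h

private lemma holder_key {k : ℕ} {γ : ℝ} (hγ : 0 < γ)
    {f g : (Fin k → ℝ) → ℝ}
    (hf0 : ∀ x, 0 ≤ f x) (hg0 : ∀ x, 0 ≤ g x)
    (hfint : Integrable (fun x => f x ^ (1 + γ)))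
    (hgint : Integrable (fun x => g x ^ (1 + γ)))
    (hfgint : Integrable (fun x => f x * g x ^ γ))
    (hfpos : 0 < ∫ x, f x ^ (1 + γ))
    (hgpos : 0 < ∫ x, g x ^ (1 + γ)) :
    (∫ x, f x * g x ^ γ) ≤
      (∫ x, f x ^ (1 + γ)) ^ (1 + γ)⁻¹ * ((∫ x, g x ^ (1 + γ)) ^ (1 + γ)⁻¹) ^ γ ∧
    ((∫ x, f x * g x ^ γ) =
        (∫ x, f x ^ (1 + γ)) ^ (1 + γ)⁻¹ * ((∫ x, g x ^ (1 + γ)) ^ (1 + γ)⁻¹) ^ γ →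
      f =ᵐ[volume] fun x =>
        ((∫ x, f x ^ (1 + γ)) ^ (1 + γ)⁻¹ / (∫ x, g x ^ (1 + γ)) ^ (1 + γ)⁻¹) * g x) := by
  have hp1 : (1:ℝ) < 1 + γ := by linarith
  have hp0 : (1 + γ) ≠ 0 := by positivity
  set p : ℝ := 1 + γ with hp
  set q : ℝ := (1 + γ) / γ with hq
  have hpq : Real.HolderConjugate p q := Real.holderConjugate_iff.mpr ⟨hp1, by rw [hp, hq]; field_simp⟩
  have hγq : γ * q = p := by rw [hp, hq]; field_simp
  set A : ℝ := (∫ x, f x ^ p) ^ p⁻¹ with hA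
  set B : ℝ := (∫ x, g x ^ p) ^ p⁻¹ with hB
  have hApos : 0 < A := Real.rpow_pos_of_pos hfpos _
  have hBpos : 0 < B := Real.rpow_pos_of_pos hgpos _
  have hApow : A ^ p = ∫ x, f x ^ p := Real.rpow_inv_rpow hfpos.le hp0
  have hBpow : B ^ p = ∫ x, g x ^ p := Real.rpow_inv_rpow hgpos.le hp0
  have hBγ : 0 < B ^ γ := Real.rpow_pos_of_pos hBpos _
  have hAB : 0 < A * B ^ γ := mul_pos hApos hBγ
  set F : (Fin k → ℝ) → ℝ := fun x =>
    f x ^ p / A ^ p / p + g x ^ p / B ^ p / q - f x * g x ^ γ / (A * B ^ γ) with hF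
  have hab : ∀ x, (f x / A) * ((g x / B) ^ γ) = f x * g x ^ γ / (A * B ^ γ) := by
    intro x
    rw [Real.div_rpow (hg0 x) hBpos.le, div_mul_div_comm]
  have hap : ∀ x, (f x / A) ^ p = f x ^ p / A ^ p := fun x =>
    Real.div_rpow (hf0 x) hApos.le p
  have hbq : ∀ x, ((g x / B) ^ γ) ^ q = g x ^ p / B ^ p := by
    intro x
    rw [← Real.rpow_mul (div_nonneg (hg0 x) hBpos.le), hγq,
      Real.div_rpow (hg0 x) hBpos.le]
  have hF0 : ∀ x, 0 ≤ F x := by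
    intro x
    have hy := Real.young_inequality_of_nonneg (div_nonneg (hf0 x) hApos.le)
      (Real.rpow_nonneg (div_nonneg (hg0 x) hBpos.le) γ) hpq
    rw [hab x, hap x, hbq x] at hy
    simp only [hF]
    linarith
  have hint1 : Integrable (fun x => f x ^ p / A ^ p / p) := (hfint.div_const _).div_const _
  have hint2 : Integrable (fun x => g x ^ p / B ^ p / q) := (hgint.div_const _).div_const _
  have hint3 : Integrable (fun x => f x * g x ^ γ / (A * B ^ γ)) := hfgint.div_const _
  have hint12 : Integrable (fun x => f x ^ p / A ^ p / p + g x ^ p / B ^ p / q) :=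
    hint1.add hint2
  have hFint : Integrable F := hint12.sub hint3
  have hI1 : ∫ x, f x ^ p / A ^ p / p = 1 / p := by
    rw [integral_div, integral_div, hApow, div_self hfpos.ne']
  have hI2 : ∫ x, g x ^ p / B ^ p / q = 1 / q := by
    rw [integral_div, integral_div, hBpow, div_self hgpos.ne']
  have hI3 : ∫ x, f x * g x ^ γ / (A * B ^ γ) = (∫ x, f x * g x ^ γ) / (A * B ^ γ) :=
    integral_div _ _
  have hsum : 1 / p + 1 / q = 1 := by
    rw [one_div, one_div]; exact hpq.inv_add_inv_eq_one
  have hFeq : ∫ x, F x = 1 - (∫ x, f x * g x ^ γ) / (A * B ^ γ) := by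
    rw [hF]
    rw [integral_sub hint12 hint3, integral_add hint1 hint2, hI1, hI2, hI3, hsum]
  have hFnn : 0 ≤ ∫ x, F x := integral_nonneg hF0
  have hineq : (∫ x, f x * g x ^ γ) ≤ A * B ^ γ := by
    rw [hFeq] at hFnn
    have : (∫ x, f x * g x ^ γ) / (A * B ^ γ) ≤ 1 := by linarith
    calc (∫ x, f x * g x ^ γ) = (∫ x, f x * g x ^ γ) / (A * B ^ γ) * (A * B ^ γ) := by
          field_simp
      _ ≤ 1 * (A * B ^ γ) := by
          exact mul_le_mul_of_nonneg_right this hAB.le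
      _ = A * B ^ γ := one_mul _
  refine ⟨hineq, fun heq => ?_⟩
  have hFz : ∫ x, F x = 0 := by
    rw [hFeq, heq, div_self hAB.ne']
    ring
  have hFae : F =ᵐ[volume] 0 :=
    (integral_eq_zero_iff_of_nonneg hF0 hFint).1 hFz
  filter_upwards [hFae] with x hx
  simp only [Pi.zero_apply, hF] at hx
  have heqpt : (f x / A) * ((g x / B) ^ γ) =
      (f x / A) ^ p / p + ((g x / B) ^ γ) ^ q / q := by
    rw [hab x, hap x, hbq x]
    linarith
  have hye := young_eq hpq (div_nonneg (hf0 x) hApos.le)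
    (Real.rpow_nonneg (div_nonneg (hg0 x) hBpos.le) γ) heqpt
  rw [hbq x, hap x, ← Real.div_rpow (hf0 x) hApos.le, ← Real.div_rpow (hg0 x) hBpos.le] at hye
  have hdiv : f x / A = g x / B := by
    have h1 := congrArg (fun t => t ^ p⁻¹) hye
    simpa [Real.rpow_rpow_inv (div_nonneg (hf0 x) hApos.le) hp0,
      Real.rpow_rpow_inv (div_nonneg (hg0 x) hBpos.le) hp0] using h1
  have hmul := (div_eq_div_iff hApos.ne' hBpos.ne').1 hdiv
  rw [div_mul_eq_mul_div, eq_div_iff hBpos.ne']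
  linarith

theorem pseudo_spherical_score_equality_iff_linearly_dependent
    {k : ℕ} (γ : ℝ) (hγ : 0 < γ)
    (f g : (Fin k → ℝ) → ℝ)
    (hfm : Measurable f) (hgm : Measurable g)
    (hf0 : ∀ x, 0 ≤ f x) (hg0 : ∀ x, 0 ≤ g x)
    (hfint : Integrable (fun x => f x ^ (1 + γ)))
    (hgint : Integrable (fun x => g x ^ (1 + γ)))
    (hfgint : Integrable (fun x => f x * g x ^ γ))
    (hfpos : 0 < ∫ x, f x ^ (1 + γ))
    (hgpos : 0 < ∫ x, g x ^ (1 + γ)) :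
    (-(∫ x, f x * f x ^ γ) / (∫ x, f x ^ (1 + γ)) ^ (γ / (1 + γ)) ≤
        -(∫ x, f x * g x ^ γ) / (∫ x, g x ^ (1 + γ)) ^ (γ / (1 + γ))) ∧
    (-(∫ x, f x * g x ^ γ) / (∫ x, g x ^ (1 + γ)) ^ (γ / (1 + γ)) =
        -(∫ x, f x * f x ^ γ) / (∫ x, f x ^ (1 + γ)) ^ (γ / (1 + γ)) ↔
      ∃ lam : ℝ, 0 < lam ∧ f =ᵐ[volume] (fun x => lam * g x)) := by
  have hp0 : (1 + γ) ≠ 0 := by positivity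
  set A : ℝ := (∫ x, f x ^ (1 + γ)) ^ (1 + γ)⁻¹ with hA
  set B : ℝ := (∫ x, g x ^ (1 + γ)) ^ (1 + γ)⁻¹ with hB
  have hApos : 0 < A := Real.rpow_pos_of_pos hfpos _
  have hBpos : 0 < B := Real.rpow_pos_of_pos hgpos _
  have hBγ : 0 < B ^ γ := Real.rpow_pos_of_pos hBpos _
  -- the self-integral
  have hff : ∫ x, f x * f x ^ γ = ∫ x, f x ^ (1 + γ) := by
    congr 1; funext x
    rw [Real.rpow_add' (hf0 x) hp0, Real.rpow_one]
  -- LHS score is -A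
  have hL : -(∫ x, f x * f x ^ γ) / (∫ x, f x ^ (1 + γ)) ^ (γ / (1 + γ)) = -A := by
    rw [hff, hA, neg_div]
    congr 1
    have h1 : (1:ℝ) - γ / (1 + γ) = (1 + γ)⁻¹ := by field_simp; ring
    rw [← h1, Real.rpow_sub hfpos, Real.rpow_one]
  -- denominator of RHS
  have hDen : (∫ x, g x ^ (1 + γ)) ^ (γ / (1 + γ)) = B ^ γ := by
    rw [hB, ← Real.rpow_mul hgpos.le]
    congr 1
    field_simp
  have hkey := holder_key hγ hf0 hg0 hfint hgint hfgint hfpos hgpos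
  rw [← hA, ← hB] at hkey
  constructor
  · rw [hL, hDen, neg_div]
    apply neg_le_neg
    exact (div_le_iff₀ hBγ).2 hkey.1
  · rw [hL, hDen]
    have hiff : -(∫ x, f x * g x ^ γ) / B ^ γ = -A ↔
        (∫ x, f x * g x ^ γ) = A * B ^ γ := by
      rw [neg_div, neg_inj, div_eq_iff hBγ.ne']
    rw [hiff]
    constructor
    · intro heq
      exact ⟨A / B, div_pos hApos hBpos, hkey.2 heq⟩
    · rintro ⟨lam, hlam, hae⟩
      have hfg : ∫ x, f x * g x ^ γ = lam * ∫ x, g x ^ (1 + γ) := by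
        have hcong : (fun x => f x * g x ^ γ) =ᵐ[volume]
            fun x => lam * g x ^ (1 + γ) := by
          filter_upwards [hae] with x hx
          rw [hx, mul_assoc, Real.rpow_add' (hg0 x) hp0, Real.rpow_one]
        rw [integral_congr_ae hcong, integral_const_mul]
      have hfp : ∫ x, f x ^ (1 + γ) = lam ^ (1 + γ) * ∫ x, g x ^ (1 + γ) := by
        have hcong : (fun x => f x ^ (1 + γ)) =ᵐ[volume]
            fun x => lam ^ (1 + γ) * g x ^ (1 + γ) := by
          filter_upwards [hae] with x hx
          rw [hx, Real.mul_rpow hlam.le (hg0 x)]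
        rw [integral_congr_ae hcong, integral_const_mul]
      have hAlamB : A = lam * B := by
        rw [hA, hfp, Real.mul_rpow (Real.rpow_nonneg hlam.le _) hgpos.le,
          Real.rpow_rpow_inv hlam.le hp0, ← hB]
      have hBpow : B ^ (1 + γ) = ∫ x, g x ^ (1 + γ) :=
        Real.rpow_inv_rpow hgpos.le hp0
      rw [hfg, ← hBpow, Real.rpow_add hBpos, Real.rpow_one, hAlamB]
      ring
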